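/- The probability measure on [0,1] with density 1/(π√(x(1-x))) (the Beta(1/2,1/2) distribution) is invariant under the logistic map f(x) = 4x(1-x): for every Borel set A ⊆ [0,1], the measure of f⁻¹(A) equals the measure of A. -/

import Mathlib

open MeasureTheory Set Real ENNReal

/-- The logistic map with μ = 4. -/
noncomputable def logistic4 (x : ℝ) : ℝ := 4 * x * (1 - x)

/-- The Beta(1/2,1/2) (arcsine) measure on [0,1]: Lebesgue measure restricted to [0,1]
with density 1/(π √(x(1-x))). -/
noncomputable def arcsineMeasure : MeasureTheory.Measure ℝ :=
  (MeasureTheory.volume.restrict (Set.Icc (0:ℝ) 1)).withDensity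
    (fun x => ENNReal.ofReal (1 / (Real.pi * Real.sqrt (x * (1 - x)))))

noncomputable def rhoE (x : ℝ) : ℝ≥0∞ :=
  ENNReal.ofReal (1 / (Real.pi * Real.sqrt (x * (1 - x))))

lemma arcsine_apply {S : Set ℝ} (hS : MeasurableSet S) (hS1 : S ⊆ Set.Icc (0:ℝ) 1) :
    arcsineMeasure S = ∫⁻ x in S, rhoE x := by
  rw [arcsineMeasure, withDensity_apply _ hS, Measure.restrict_restrict hS,
    Set.inter_eq_self_of_subset_left hS1]
  rfl

lemma logistic4_hasDeriv (x : ℝ) (s : Set ℝ) :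
    HasDerivWithinAt logistic4 (4 - 8 * x) s x := by
  have h0 := ((hasDerivAt_id x).const_mul (4:ℝ)).mul
    ((hasDerivAt_const x (1:ℝ)).sub (hasDerivAt_id x))
  simp only [id_eq] at h0
  have h : HasDerivAt (fun y : ℝ => 4 * y * (1 - y)) (4 - 8 * x) x := by
    exact h0.congr_deriv (by simp; ring)
  exact h.hasDerivWithinAt

-- pointwise density identity
lemma density_identity {x : ℝ} (hx : x ∈ Set.Icc (0:ℝ) 1) (hhalf : x ≠ 1/2) :
    rhoE x = ENNReal.ofReal |4 - 8 * x| * (rhoE (logistic4 x) / 2) := by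
  obtain ⟨h0, h1⟩ := hx
  have hxx : 0 ≤ x * (1 - x) := mul_nonneg h0 (by linarith)
  have hsq : logistic4 x * (1 - logistic4 x) = (x * (1 - x)) * (2 * (1 - 2*x))^2 := by
    simp only [logistic4]; ring
  set b : ℝ := |2 * (1 - 2*x)| with hb
  set s : ℝ := Real.sqrt (x * (1 - x)) with hsdef
  have hsqrt : Real.sqrt (logistic4 x * (1 - logistic4 x)) = s * b := by
    rw [hsq, Real.sqrt_mul hxx, Real.sqrt_sq_eq_abs]
  have habs : (0:ℝ) < b := by
    rw [hb]; apply abs_pos.2; intro h; apply hhalf; linarith [h]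
  have hreal : 1 / (Real.pi * s)
      = |4 - 8 * x| * ((1 / (Real.pi * Real.sqrt (logistic4 x * (1 - logistic4 x)))) / 2) := by
    rw [hsqrt]
    have habs2 : |4 - 8 * x| = 2 * b := by
      rw [hb, show (4:ℝ) - 8 * x = 2 * (2 * (1 - 2*x)) by ring, abs_mul, abs_two]
    rcases eq_or_lt_of_le (Real.sqrt_nonneg (x * (1-x))) with hs | hs
    · rw [← hsdef] at hs; rw [← hs]; simp
    · rw [← hsdef] at hs
      rw [habs2]
      rw [show (2:ℝ) * b * (1 / (Real.pi * (s * b)) / 2) = b / (Real.pi * (s * b)) by ring]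
      rw [div_eq_div_iff (by positivity) (by positivity)]
      ring
  rw [rhoE, rhoE, ← hsdef, hreal, ENNReal.ofReal_mul (abs_nonneg _)]
  congr 1
  rw [ENNReal.ofReal_div_of_pos (by norm_num : (0:ℝ) < 2), ENNReal.ofReal_ofNat]

lemma measurable_rhoE : Measurable rhoE := by
  apply Measurable.ennreal_ofReal
  apply Measurable.div measurable_const
  exact (measurable_const.mul ((measurable_id.mul (measurable_const.sub measurable_id)).sqrt))

set_option maxHeartbeats 800000 in
-- change of variables on a branch
lemma branch_lintegral {s : Set ℝ} (hs : MeasurableSet s) (hs1 : s ⊆ Set.Icc (0:ℝ) 1)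
    (hinj : Set.InjOn logistic4 s) :
    ∫⁻ x in s, rhoE x = ∫⁻ y in logistic4 '' s, rhoE y / 2 := by
  have hcv := MeasureTheory.lintegral_image_eq_lintegral_abs_det_fderiv_mul
    (volume : Measure ℝ) hs
    (fun x _ => ((logistic4_hasDeriv x s).hasFDerivWithinAt)) hinj (fun y => rhoE y / 2)
  simp only [ContinuousLinearMap.det_toSpanSingleton] at hcv
  rw [hcv]
  have hae : s =ᵐ[volume] ((s \ {(1/2 : ℝ)} : Set ℝ)) := by
    refine (MeasureTheory.diff_ae_eq_self.2 ?_).symm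
    exact measure_mono_null Set.inter_subset_right (measure_singleton _)
  rw [setLIntegral_congr hae, setLIntegral_congr hae]
  apply setLIntegral_congr_fun (hs.diff (measurableSet_singleton _))
  intro x hx
  exact density_identity (hs1 hx.1) hx.2

lemma injOn_left : Set.InjOn logistic4 (Set.Icc (0:ℝ) (1/2)) := by
  intro x hx y hy h
  simp only [Set.mem_Icc] at hx hy
  have h2 : (x - y) * (1 - x - y) = 0 := by
    simp only [logistic4] at h; nlinarith [h]
  rcases mul_eq_zero.1 h2 with h3 | h3
  · linarith
  · linarith [hx.2, hy.2]

lemma injOn_right : Set.InjOn logistic4 (Set.Ioc (1/2:ℝ) 1) := by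
  intro x hx y hy h
  simp only [Set.mem_Ioc] at hx hy
  have h2 : (x - y) * (1 - x - y) = 0 := by
    simp only [logistic4] at h; nlinarith [h]
  rcases mul_eq_zero.1 h2 with h3 | h3
  · linarith
  · linarith [hx.1, hy.1]

lemma image_left : logistic4 '' (Set.Icc (0:ℝ) (1/2)) = Set.Icc (0:ℝ) 1 := by
  ext y
  constructor
  · rintro ⟨x, hx, rfl⟩
    simp only [Set.mem_Icc] at hx ⊢
    constructor
    · simp only [logistic4]; nlinarith [hx.1, hx.2]
    · simp only [logistic4]; nlinarith [sq_nonneg (1 - 2*x)]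
  · intro hy
    simp only [Set.mem_Icc] at hy
    set t := Real.sqrt (1 - y) with ht
    have ht0 : 0 ≤ t := Real.sqrt_nonneg _
    have ht1 : t ≤ 1 := by
      rw [ht]; exact Real.sqrt_le_one.mpr (by linarith)
    have htsq : t^2 = 1 - y := Real.sq_sqrt (by linarith)
    refine ⟨(1 - t)/2, ?_, ?_⟩
    · simp only [Set.mem_Icc]; constructor <;> linarith
    · simp only [logistic4]; nlinarith [htsq]

lemma image_right : logistic4 '' (Set.Ioc (1/2:ℝ) 1) = Set.Ico (0:ℝ) 1 := by
  ext y
  constructor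
  · rintro ⟨x, hx, rfl⟩
    simp only [Set.mem_Ioc] at hx
    simp only [Set.mem_Ico]
    constructor
    · simp only [logistic4]; nlinarith [hx.1, hx.2]
    · simp only [logistic4]; nlinarith [sq_nonneg (1 - 2*x), hx.1]
  · intro hy
    simp only [Set.mem_Ico] at hy
    set t := Real.sqrt (1 - y) with ht
    have ht0 : 0 < t := Real.sqrt_pos.2 (by linarith)
    have ht1 : t ≤ 1 := by
      rw [ht]; exact Real.sqrt_le_one.mpr (by linarith)
    have htsq : t^2 = 1 - y := Real.sq_sqrt (by linarith)
    refine ⟨(1 + t)/2, ?_, ?_⟩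
    · simp only [Set.mem_Ioc]; constructor <;> linarith
    · simp only [logistic4]; nlinarith [htsq]

theorem logistic_arcsine_invariant (A : Set ℝ) (hA : MeasurableSet A)
    (hA1 : A ⊆ Set.Icc (0:ℝ) 1) :
    arcsineMeasure (logistic4 ⁻¹' A ∩ Set.Icc (0:ℝ) 1) = arcsineMeasure A := by
  have hmf : Measurable logistic4 := by
    have : Continuous logistic4 := by unfold logistic4; continuity
    exact this.measurable
  have hP : MeasurableSet (logistic4 ⁻¹' A) := hmf hA
  have hsplit : logistic4 ⁻¹' A ∩ Set.Icc (0:ℝ) 1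
      = (logistic4 ⁻¹' A ∩ Set.Icc (0:ℝ) (1/2)) ∪ (logistic4 ⁻¹' A ∩ Set.Ioc (1/2:ℝ) 1) := by
    rw [← Set.inter_union_distrib_left, Set.Icc_union_Ioc_eq_Icc (by norm_num) (by norm_num)]
  have hm1 : MeasurableSet (logistic4 ⁻¹' A ∩ Set.Icc (0:ℝ) (1/2)) := hP.inter measurableSet_Icc
  have hm2 : MeasurableSet (logistic4 ⁻¹' A ∩ Set.Ioc (1/2:ℝ) 1) := hP.inter measurableSet_Ioc
  have hsub : logistic4 ⁻¹' A ∩ Set.Icc (0:ℝ) 1 ⊆ Set.Icc (0:ℝ) 1 := Set.inter_subset_right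
  rw [arcsine_apply (hP.inter measurableSet_Icc) hsub, arcsine_apply hA hA1, hsplit]
  rw [lintegral_union hm2 (((Set.Iic_disjoint_Ioc (le_refl (1/2:ℝ))).mono
    Set.Icc_subset_Iic_self le_rfl).mono Set.inter_subset_right Set.inter_subset_right)]
  have hb1 := branch_lintegral hm1 (Set.inter_subset_right.trans (fun x hx => by
      simp only [Set.mem_Icc] at hx ⊢; exact ⟨hx.1, by linarith [hx.2]⟩))
      (injOn_left.mono Set.inter_subset_right)
  have hb2 := branch_lintegral hm2 (Set.inter_subset_right.trans (fun x hx => by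
      simp only [Set.mem_Ioc, Set.mem_Icc] at hx ⊢; exact ⟨by linarith [hx.1], hx.2⟩))
      (injOn_right.mono Set.inter_subset_right)
  have him1 : logistic4 '' (logistic4 ⁻¹' A ∩ Set.Icc (0:ℝ) (1/2)) = A := by
    rw [Set.image_preimage_inter, image_left, Set.inter_eq_self_of_subset_left hA1]
  have him2 : logistic4 '' (logistic4 ⁻¹' A ∩ Set.Ioc (1/2:ℝ) 1) = A ∩ Set.Ico 0 1 := by
    rw [Set.image_preimage_inter, image_right]
  rw [hb1, hb2, him1, him2]
  have hae : ((A ∩ Set.Ico (0:ℝ) 1 : Set ℝ)) =ᵐ[volume] A := by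
    have hU : A = (A ∩ Set.Ico (0:ℝ) 1) ∪ (A ∩ {1}) := by
      ext x; simp only [Set.mem_union, Set.mem_inter_iff, Set.mem_Ico, Set.mem_singleton_iff]
      constructor
      · intro hx
        rcases lt_or_eq_of_le (hA1 hx).2 with h | h
        · exact Or.inl ⟨hx, (hA1 hx).1, h⟩
        · exact Or.inr ⟨hx, h⟩
      · rintro (⟨h, _⟩ | ⟨h, _⟩) <;> exact h
    nth_rewrite 2 [hU]
    refine (MeasureTheory.union_ae_eq_left_of_ae_eq_empty ?_).symm
    exact ae_eq_empty.2 (measure_mono_null Set.inter_subset_right (measure_singleton _))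
  rw [setLIntegral_congr hae]
  rw [← lintegral_add_left (measurable_rhoE.div_const 2)]
  simp only [ENNReal.add_halves]
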